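/- Let T^n_i be the rescaled trajectory of particle i in the interchange process on the path of length n, and let m_i(δ) = sup_{s,t ∈ [0,T], |s−t| ≤ δ} |T^n_i(t) − T^n_i(s)|. Then max_{1 ≤ i ≤ n} P(m_i(δ) > 2δ^{1/8}) ≤ 2⁷ T (δ^{1/2} + δ^{−1/2}/n²) for T ≥ 1 and 0 < δ ≤ 1. -/

import Mathlib

open MeasureTheory ProbabilityTheory

/-- The folding map `π_n : ℤ → {1,…,n}`. -/
def foldPath (n : ℕ) (x : ℤ) : ℤ :=
  let y : ℤ := (x - 1) % (2 * n) + 1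
  if y ≤ n then y else 2 * n + 1 - y

/-- `N` is a Poisson (counting) process of rate `r`. -/
def IsPoissonProcess {Ω : Type*} [MeasurableSpace Ω] (P : Measure Ω) (r : NNReal)
    (N : ℝ → Ω → ℕ) : Prop :=
  (∀ ω, N 0 ω = 0) ∧
  (∀ ω, Monotone fun t => N t ω) ∧
  (∀ t, Measurable (N t)) ∧
  (∀ s t : ℝ, 0 ≤ s → s ≤ t →
    Measure.map (fun ω => N t ω - N s ω) P
      = (poissonPMF (r * Real.toNNReal (t - s))).toMeasure) ∧
  (∀ (k : ℕ) (t : ℕ → ℝ), (∀ i, 0 ≤ t i) → Monotone t →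
    iIndepFun
      (fun i : Fin k => fun ω => N (t (i + 1)) ω - N (t i) ω) P)




lemma foldPath_step (n : ℕ) (hn : 0 < n) (x : ℤ) :
    |foldPath n (x + 1) - foldPath n x| ≤ 1 := by
  have hm : (0:ℤ) < 2 * n := by positivity
  set r : ℤ := (x - 1) % (2 * n) with hr
  have h0 : 0 ≤ r := Int.emod_nonneg _ (by omega)
  have h1 : r < 2 * n := Int.emod_lt_of_pos _ hm
  have hx1 : (x + 1 - 1) % (2 * n) = (r + 1) % (2 * n) := by
    have : x + 1 - 1 = (x - 1) + 1 := by ring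
    have h11 : (1:ℤ) % (2 * n) = 1 := Int.emod_eq_of_lt (by norm_num) (by omega)
    rw [this, Int.add_emod, ← hr, h11]
  by_cases hcase : r + 1 < 2 * n
  · have : (r + 1) % (2 * n) = r + 1 := Int.emod_eq_of_lt (by omega) hcase
    rw [foldPath, foldPath, hx1, this, ← hr]
    split_ifs <;> [skip; skip; skip; skip] <;> rw [abs_le] <;> constructor <;> omega
  · have hr2 : r + 1 = 2 * n := by omega
    have : (r + 1) % (2 * n) = 0 := by rw [hr2]; exact Int.emod_self
    rw [foldPath, foldPath, hx1, this, ← hr]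
    split_ifs <;> rw [abs_le] <;> constructor <;> omega

lemma foldPath_lipschitz (n : ℕ) (hn : 0 < n) (a b : ℤ) :
    |foldPath n a - foldPath n b| ≤ |a - b| := by
  have key : ∀ (k : ℕ) (c : ℤ), |foldPath n (c + k) - foldPath n c| ≤ k := by
    intro k
    induction k with
    | zero => intro c; simp
    | succ k ih =>
      intro c
      have h1 := foldPath_step n hn (c + k)
      have h2 := ih c
      have heq : (c + ((k+1:ℕ) : ℤ)) = (c + (k:ℤ)) + 1 := by push_cast; ring
      rw [heq]
      calc |foldPath n ((c + k) + 1) - foldPath n c|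
          ≤ |foldPath n ((c + k) + 1) - foldPath n (c + k)| + |foldPath n (c + k) - foldPath n c| :=
            abs_sub_le _ _ _
        _ ≤ 1 + k := add_le_add h1 h2
        _ = ((k+1 : ℕ) : ℤ) := by push_cast; ring
  rcases le_total b a with h | h
  · have : a = b + ((a - b).toNat : ℤ) := by omega
    calc |foldPath n a - foldPath n b| = |foldPath n (b + ((a-b).toNat:ℤ)) - foldPath n b| := by rw [← this]
      _ ≤ ((a-b).toNat : ℤ) := key _ b
      _ ≤ |a - b| := by have := abs_of_nonneg (show (0:ℤ) ≤ a - b by omega); omega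
  · have : b = a + ((b - a).toNat : ℤ) := by omega
    calc |foldPath n a - foldPath n b| = |foldPath n b - foldPath n a| := abs_sub_comm _ _
      _ = |foldPath n (a + ((b-a).toNat:ℤ)) - foldPath n a| := by rw [← this]
      _ ≤ ((b-a).toNat : ℤ) := key _ a
      _ ≤ |a - b| := by
          rw [abs_sub_comm]
          have := abs_of_nonneg (show (0:ℤ) ≤ b - a by omega); omega

section Poisson
open Real

lemma poissonReal_shift2 (r : NNReal) (q : ℕ) :
    (((q:ℝ)+2)^2 - ((q:ℝ)+2)) * poissonPMFReal r (q+2) = (r:ℝ)^2 * poissonPMFReal r q := by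
  unfold poissonPMFReal
  have hf : (((q+2).factorial : ℝ)) = ((q:ℝ)+2)*((q:ℝ)+1)*(q.factorial) := by
    rw [Nat.factorial_succ, Nat.factorial_succ]; push_cast; ring
  have hfn : ((q.factorial : ℝ)) ≠ 0 := Nat.cast_ne_zero.mpr q.factorial_ne_zero
  rw [hf]
  have : (r:ℝ)^(q+2) = (r:ℝ)^q * (r:ℝ)^2 := by ring
  rw [this]
  field_simp
  ring

lemma poissonReal_shift1 (r : NNReal) (q : ℕ) :
    ((q:ℝ)+1) * poissonPMFReal r (q+1) = (r:ℝ) * poissonPMFReal r q := by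
  unfold poissonPMFReal
  have hf : (((q+1).factorial : ℝ)) = ((q:ℝ)+1)*(q.factorial) := by
    rw [Nat.factorial_succ]; push_cast; ring
  have hfn : ((q.factorial : ℝ)) ≠ 0 := Nat.cast_ne_zero.mpr q.factorial_ne_zero
  rw [hf]
  have : (r:ℝ)^(q+1) = (r:ℝ)^q * r := by ring
  rw [this]
  field_simp

lemma poisson_hasSum_sq (r : NNReal) :
    HasSum (fun q : ℕ => poissonPMFReal r q * (q:ℝ)^2) ((r:ℝ)^2 + r) := by
  have h2 : HasSum (fun q : ℕ => ((q:ℝ)^2 - q) * poissonPMFReal r q) ((r:ℝ)^2) := by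
    have base := (poissonPMFRealSum r).mul_left ((r:ℝ)^2)
    rw [mul_one] at base
    have heq : (fun q : ℕ => (((q+2:ℕ):ℝ)^2 - ((q+2:ℕ):ℝ)) * poissonPMFReal r (q+2))
        = fun q : ℕ => (r:ℝ)^2 * poissonPMFReal r q := by
      funext q; push_cast; exact poissonReal_shift2 r q
    have := (hasSum_nat_add_iff (f := fun q : ℕ => ((q:ℝ)^2 - q) * poissonPMFReal r q) 2).mp
      (heq ▸ base)
    have hS : ∑ q ∈ Finset.range 2, ((q:ℝ)^2 - q) * poissonPMFReal r q = 0 := by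
      simp [Finset.sum_range_succ]
    rw [hS, add_zero] at this
    exact this
  have h1 : HasSum (fun q : ℕ => (q:ℝ) * poissonPMFReal r q) ((r:ℝ)) := by
    have base := (poissonPMFRealSum r).mul_left ((r:ℝ))
    rw [mul_one] at base
    have heq : (fun q : ℕ => (((q+1:ℕ):ℝ)) * poissonPMFReal r (q+1))
        = fun q : ℕ => (r:ℝ) * poissonPMFReal r q := by
      funext q; push_cast; exact poissonReal_shift1 r q
    have := (hasSum_nat_add_iff (f := fun q : ℕ => ((q:ℝ)) * poissonPMFReal r q) 1).mp
      (heq ▸ base)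
    have hS : ∑ q ∈ Finset.range 1, ((q:ℝ)) * poissonPMFReal r q = 0 := by
      simp
    rw [hS, add_zero] at this
    exact this
  have := h2.add h1
  convert this using 2 with q
  ring

lemma poisson_tsum_sq (r : NNReal) :
    ∑' q : ℕ, (poissonPMF r q) * ENNReal.ofReal ((q:ℝ)^2)
      = ENNReal.ofReal ((r:ℝ)^2 + r) := by
  have happ : ∀ q : ℕ, (poissonPMF r) q = ENNReal.ofReal (poissonPMFReal r q) := fun q => rfl
  have hcomb : ∀ q : ℕ, (poissonPMF r) q * ENNReal.ofReal ((q:ℝ)^2)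
      = ENNReal.ofReal (poissonPMFReal r q * (q:ℝ)^2) := by
    intro q
    rw [happ, ← ENNReal.ofReal_mul poissonPMFReal_nonneg]
  simp_rw [hcomb]
  rw [← ENNReal.ofReal_tsum_of_nonneg (fun q => mul_nonneg poissonPMFReal_nonneg (by positivity))
    (poisson_hasSum_sq r).summable, (poisson_hasSum_sq r).tsum_eq]

end Poisson

section Core
variable {Ω : Type*} [MeasurableSpace Ω] (P : Measure Ω) [IsProbabilityMeasure P]
variable (X : ℕ → Ω → ℤ)

/-- partial sums of the walk increments, real valued -/
def walkSum (p m : ℕ) (ω : Ω) : ℝ := ∑ j ∈ Finset.Ico p (p + m), (X j ω : ℝ)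

variable {X}

lemma walkSum_measurable (hXmeas : ∀ j, Measurable (X j)) (p m : ℕ) :
    Measurable (walkSum X p m) :=
  Finset.measurable_sum _ fun j _ => (measurable_of_countable (Int.cast : ℤ → ℝ)).comp (hXmeas j)

lemma X_ae_pm (hXmeas : ∀ j, Measurable (X j))
    (hXdist : ∀ j, P {ω | X j ω = 1} = 1/2 ∧ P {ω | X j ω = -1} = 1/2) :
    ∀ᵐ ω ∂P, ∀ j, X j ω = 1 ∨ X j ω = -1 := by
  rw [MeasureTheory.ae_all_iff]
  intro j
  have hA : MeasurableSet {ω | X j ω = 1} := (hXmeas j) (measurableSet_singleton 1)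
  have hB : MeasurableSet {ω | X j ω = -1} := (hXmeas j) (measurableSet_singleton (-1))
  have hd : Disjoint {ω | X j ω = 1} {ω | X j ω = -1} := by
    rw [Set.disjoint_left]; intro ω h1 h2; simp at h1 h2; omega
  have hu : P ({ω | X j ω = 1} ∪ {ω | X j ω = -1}) = 1 := by
    rw [measure_union hd hB, (hXdist j).1, (hXdist j).2]
    rw [ENNReal.div_add_div_same]
    rw [one_add_one_eq_two]
    exact ENNReal.div_self (two_ne_zero) (ENNReal.ofNat_ne_top)
  have : P ({ω | X j ω = 1} ∪ {ω | X j ω = -1})ᶜ = 0 := by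
    rw [measure_compl (hA.union hB) (measure_ne_top _ _), hu, measure_univ, tsub_self]
  filter_upwards [MeasureTheory.measure_eq_zero_iff_ae_notMem.mp this] with ω hω
  exact or_iff_not_imp_left.mpr (by simpa using hω)

lemma walkSum_ae_bdd (hXmeas : ∀ j, Measurable (X j))
    (hXdist : ∀ j, P {ω | X j ω = 1} = 1/2 ∧ P {ω | X j ω = -1} = 1/2) (p m : ℕ) :
    ∀ᵐ ω ∂P, |walkSum X p m ω| ≤ m := by
  filter_upwards [X_ae_pm P hXmeas hXdist] with ω hω
  calc |walkSum X p m ω| ≤ ∑ j ∈ Finset.Ico p (p+m), |(X j ω : ℝ)| := Finset.abs_sum_le_sum_abs _ _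
    _ ≤ ∑ j ∈ Finset.Ico p (p+m), 1 := by
        refine Finset.sum_le_sum fun j _ => ?_
        rcases hω j with h | h <;> simp [h]
    _ = m := by simp

lemma int_aux {f : Ω → ℝ} (hf : Measurable f) {C : ℝ} (hC : ∀ᵐ ω ∂P, |f ω| ≤ C) :
    Integrable f P := by
  refine (integrable_const C).mono' hf.aestronglyMeasurable ?_
  filter_upwards [hC] with ω hω
  simpa [Real.norm_eq_abs] using hω

omit [IsProbabilityMeasure P] in
/-- master independence lemma: any functions of disjoint blocks of the `X j` are independent -/
lemma blockIndep (hXmeas : ∀ j, Measurable (X j))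
    (hXindep : iIndepFun X P)
    (S T : Finset ℕ) (hST : Disjoint S T)
    (F : (S → ℤ) → ℝ) (G : (T → ℤ) → ℝ) :
    IndepFun (fun ω => F (fun i => X i ω)) (fun ω => G (fun i => X i ω)) P :=
  (hXindep.indepFun_finset S T hST hXmeas).comp
    (measurable_of_countable F) (measurable_of_countable G)


lemma integral_X_pow (hXmeas : ∀ j, Measurable (X j))
    (hXdist : ∀ j, P {ω | X j ω = 1} = 1/2 ∧ P {ω | X j ω = -1} = 1/2) (j k : ℕ) :
    ∫ ω, ((X j ω : ℝ))^k ∂P = ((1:ℝ)^k + (-1:ℝ)^k)/2 := by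
  have hA : MeasurableSet {ω | X j ω = 1} := (hXmeas j) (measurableSet_singleton 1)
  have hae : (fun ω => ((X j ω : ℝ))^k) =ᵐ[P]
      fun ω => (-1:ℝ)^k + Set.indicator {ω | X j ω = 1} (fun _ => (1:ℝ)^k - (-1:ℝ)^k) ω := by
    filter_upwards [X_ae_pm P hXmeas hXdist] with ω hω
    rcases hω j with h | h
    · have : ω ∈ {ω | X j ω = 1} := h
      simp [Set.indicator_of_mem this, h]
    · have : ω ∉ {ω | X j ω = 1} := by simp [h]
      simp [Set.indicator_of_notMem this, h]
  rw [integral_congr_ae hae, integral_add (integrable_const _)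
    ((integrable_const ((1:ℝ)^k - (-1:ℝ)^k)).indicator hA),
    integral_const, integral_indicator_const _ hA]
  have h2 : (P {ω | X j ω = 1}).toReal = 1/2 := by
    rw [(hXdist j).1]
    simp [ENNReal.toReal_div]
  rw [show P.real {ω | X j ω = 1} = 1/2 from h2]
  simp [smul_eq_mul]
  ring

lemma int_WV (hXmeas : ∀ j, Measurable (X j))
    (hXdist : ∀ j, P {ω | X j ω = 1} = 1/2 ∧ P {ω | X j ω = -1} = 1/2)
    (p q a b : ℕ) :
    Integrable (fun ω => (walkSum X p q ω)^a * ((X (p+q) ω : ℝ))^b) P := by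
  refine int_aux P (((walkSum_measurable hXmeas p q).pow_const a).mul
    (((measurable_of_countable (Int.cast : ℤ → ℝ)).comp (hXmeas (p+q))).pow_const b))
    (C := (q:ℝ)^a) ?_
  filter_upwards [walkSum_ae_bdd P hXmeas hXdist p q, X_ae_pm P hXmeas hXdist] with ω h1 h2
  rw [abs_mul, abs_pow, abs_pow]
  have hb : |((X (p+q) ω : ℝ))| ≤ 1 := by rcases h2 (p+q) with h | h <;> simp [h]
  calc |walkSum X p q ω| ^ a * |((X (p+q) ω : ℝ))| ^ b
      ≤ (q:ℝ)^a * 1^b := by gcongr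
    _ = (q:ℝ)^a := by simp

lemma walk_pow_integrable (hXmeas : ∀ j, Measurable (X j))
    (hXdist : ∀ j, P {ω | X j ω = 1} = 1/2 ∧ P {ω | X j ω = -1} = 1/2)
    (p q a : ℕ) : Integrable (fun ω => (walkSum X p q ω)^a) P := by
  have := int_WV P hXmeas hXdist p q a 0
  simpa using this

lemma walk_indep_mul (hXmeas : ∀ j, Measurable (X j))
    (hXindep : iIndepFun X P)
    (hXdist : ∀ j, P {ω | X j ω = 1} = 1/2 ∧ P {ω | X j ω = -1} = 1/2)
    (p q a b : ℕ) :
    ∫ ω, (walkSum X p q ω)^a * ((X (p+q) ω : ℝ))^b ∂P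
      = (∫ ω, (walkSum X p q ω)^a ∂P) * (∫ ω, ((X (p+q) ω : ℝ))^b ∂P) := by
  have hST : Disjoint (Finset.Ico p (p+q)) ({p+q} : Finset ℕ) := by
    simp [Finset.disjoint_singleton_right]
  have hI := blockIndep P hXmeas hXindep (Finset.Ico p (p+q)) ({p+q} : Finset ℕ) hST
    (fun v => (∑ i : (Finset.Ico p (p+q) : Finset ℕ), ((v i : ℤ) : ℝ))^a)
    (fun w => ((w ⟨p+q, by simp⟩ : ℤ) : ℝ)^b)
  have hF : (fun ω => (∑ i : (Finset.Ico p (p+q) : Finset ℕ), ((X (i:ℕ) ω : ℤ) : ℝ))^a)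
      = fun ω => (walkSum X p q ω)^a := by
    funext ω
    congr 1
    exact Finset.sum_coe_sort (Finset.Ico p (p+q)) (fun j => ((X j ω : ℤ) : ℝ))
  rw [hF] at hI
  exact hI.integral_fun_mul_eq_mul_integral
    (walk_pow_integrable P hXmeas hXdist p q a).aestronglyMeasurable
    (Integrable.aestronglyMeasurable (by
      have := int_WV P hXmeas hXdist p 0 0 b
      simpa using (int_WV P hXmeas hXdist (p+q) 0 0 b)))

lemma walk_moments (hXmeas : ∀ j, Measurable (X j))
    (hXindep : iIndepFun X P)
    (hXdist : ∀ j, P {ω | X j ω = 1} = 1/2 ∧ P {ω | X j ω = -1} = 1/2)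
    (p : ℕ) : ∀ q : ℕ,
    (∫ ω, (walkSum X p q ω)^1 ∂P = 0) ∧
    (∫ ω, (walkSum X p q ω)^2 ∂P = q) ∧
    (∫ ω, (walkSum X p q ω)^3 ∂P = 0) ∧
    (∫ ω, (walkSum X p q ω)^4 ∂P ≤ 3 * (q:ℝ)^2) := by
  have hV : ∀ j k, ∫ ω, ((X j ω : ℝ))^k ∂P = ((1:ℝ)^k + (-1:ℝ)^k)/2 :=
    integral_X_pow P hXmeas hXdist
  intro q
  induction q with
  | zero =>
    have h0 : ∀ ω, walkSum X p 0 ω = 0 := by intro ω; simp [walkSum]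
    refine ⟨by simp [h0], by simp [h0], by simp [h0], by simp [h0]⟩
  | succ q ih =>
    obtain ⟨ih1, ih2, ih3, ih4⟩ := ih
    have hsplit : ∀ ω, walkSum X p (q+1) ω = walkSum X p q ω + (X (p+q) ω : ℝ) := by
      intro ω
      exact Finset.sum_Ico_succ_top (Nat.le_add_right p q) _
    have hmul := walk_indep_mul P hXmeas hXindep hXdist p q
    have hint : ∀ a b : ℕ, Integrable (fun ω => (walkSum X p q ω)^a * ((X (p+q) ω : ℝ))^b) P :=
      int_WV P hXmeas hXdist p q
    have key1 : ∫ ω, (walkSum X p (q+1) ω)^1 ∂P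
        = ∫ ω, ((walkSum X p q ω)^1 * ((X (p+q) ω:ℝ))^0
          + (walkSum X p q ω)^0 * ((X (p+q) ω:ℝ))^1) ∂P := by
      refine integral_congr_ae (Filter.Eventually.of_forall fun ω => ?_)
      dsimp only
      rw [hsplit ω]; ring
    have key2 : ∫ ω, (walkSum X p (q+1) ω)^2 ∂P
        = ∫ ω, ((walkSum X p q ω)^2 * ((X (p+q) ω:ℝ))^0
          + (2 * ((walkSum X p q ω)^1 * ((X (p+q) ω:ℝ))^1)
          + (walkSum X p q ω)^0 * ((X (p+q) ω:ℝ))^2)) ∂P := by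
      refine integral_congr_ae (Filter.Eventually.of_forall fun ω => ?_)
      dsimp only
      rw [hsplit ω]; ring
    have key3 : ∫ ω, (walkSum X p (q+1) ω)^3 ∂P
        = ∫ ω, ((walkSum X p q ω)^3 * ((X (p+q) ω:ℝ))^0
          + (3 * ((walkSum X p q ω)^2 * ((X (p+q) ω:ℝ))^1)
          + (3 * ((walkSum X p q ω)^1 * ((X (p+q) ω:ℝ))^2)
          + (walkSum X p q ω)^0 * ((X (p+q) ω:ℝ))^3))) ∂P := by
      refine integral_congr_ae (Filter.Eventually.of_forall fun ω => ?_)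
      dsimp only
      rw [hsplit ω]; ring
    have key4 : ∫ ω, (walkSum X p (q+1) ω)^4 ∂P
        = ∫ ω, ((walkSum X p q ω)^4 * ((X (p+q) ω:ℝ))^0
          + (4 * ((walkSum X p q ω)^3 * ((X (p+q) ω:ℝ))^1)
          + (6 * ((walkSum X p q ω)^2 * ((X (p+q) ω:ℝ))^2)
          + (4 * ((walkSum X p q ω)^1 * ((X (p+q) ω:ℝ))^3)
          + (walkSum X p q ω)^0 * ((X (p+q) ω:ℝ))^4)))) ∂P := by
      refine integral_congr_ae (Filter.Eventually.of_forall fun ω => ?_)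
      dsimp only
      rw [hsplit ω]; ring
    have hca : ∀ (c : ℝ) (f g : Ω → ℝ), Integrable f P → Integrable g P →
        ∫ ω, (c * f ω + g ω) ∂P = c * (∫ ω, f ω ∂P) + ∫ ω, g ω ∂P := by
      intro c f g hf hg
      rw [integral_add (hf.const_mul c) hg, integral_const_mul]
    refine ⟨?_, ?_, ?_, ?_⟩
    · calc ∫ ω, (walkSum X p (q+1) ω)^1 ∂P
          = ∫ ω, ((walkSum X p q ω)^1 * ((X (p+q) ω:ℝ))^0
            + (walkSum X p q ω)^0 * ((X (p+q) ω:ℝ))^1) ∂P := key1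
        _ = (∫ ω, (walkSum X p q ω)^1 * ((X (p+q) ω:ℝ))^0 ∂P)
            + ∫ ω, (walkSum X p q ω)^0 * ((X (p+q) ω:ℝ))^1 ∂P := integral_add (hint 1 0) (hint 0 1)
        _ = 0 := by rw [hmul 1 0, hmul 0 1, ih1, hV, hV]; norm_num
    · calc ∫ ω, (walkSum X p (q+1) ω)^2 ∂P
          = ∫ ω, ((walkSum X p q ω)^2 * ((X (p+q) ω:ℝ))^0
            + (2 * ((walkSum X p q ω)^1 * ((X (p+q) ω:ℝ))^1)
            + (walkSum X p q ω)^0 * ((X (p+q) ω:ℝ))^2)) ∂P := key2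
        _ = (∫ ω, (walkSum X p q ω)^2 * ((X (p+q) ω:ℝ))^0 ∂P)
            + ∫ ω, (2 * ((walkSum X p q ω)^1 * ((X (p+q) ω:ℝ))^1)
              + (walkSum X p q ω)^0 * ((X (p+q) ω:ℝ))^2) ∂P :=
          integral_add (hint 2 0) (((hint 1 1).const_mul 2).add (hint 0 2))
        _ = (∫ ω, (walkSum X p q ω)^2 * ((X (p+q) ω:ℝ))^0 ∂P)
            + (2 * (∫ ω, (walkSum X p q ω)^1 * ((X (p+q) ω:ℝ))^1 ∂P)
              + ∫ ω, (walkSum X p q ω)^0 * ((X (p+q) ω:ℝ))^2 ∂P) := by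
          rw [hca 2 (fun ω => (walkSum X p q ω)^1 * ((X (p+q) ω:ℝ))^1) (fun ω => (walkSum X p q ω)^0 * ((X (p+q) ω:ℝ))^2) (hint 1 1) (hint 0 2)]
        _ = ((q+1:ℕ):ℝ) := by
          rw [hmul 2 0, hmul 1 1, hmul 0 2, ih1, ih2, hV, hV, hV]
          push_cast; norm_num
    · calc ∫ ω, (walkSum X p (q+1) ω)^3 ∂P
          = ∫ ω, ((walkSum X p q ω)^3 * ((X (p+q) ω:ℝ))^0
            + (3 * ((walkSum X p q ω)^2 * ((X (p+q) ω:ℝ))^1)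
            + (3 * ((walkSum X p q ω)^1 * ((X (p+q) ω:ℝ))^2)
            + (walkSum X p q ω)^0 * ((X (p+q) ω:ℝ))^3))) ∂P := key3
        _ = (∫ ω, (walkSum X p q ω)^3 * ((X (p+q) ω:ℝ))^0 ∂P)
            + ∫ ω, (3 * ((walkSum X p q ω)^2 * ((X (p+q) ω:ℝ))^1)
              + (3 * ((walkSum X p q ω)^1 * ((X (p+q) ω:ℝ))^2)
              + (walkSum X p q ω)^0 * ((X (p+q) ω:ℝ))^3)) ∂P :=
          integral_add (hint 3 0) (((hint 2 1).const_mul 3).add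
            (((hint 1 2).const_mul 3).add (hint 0 3)))
        _ = (∫ ω, (walkSum X p q ω)^3 * ((X (p+q) ω:ℝ))^0 ∂P)
            + (3 * (∫ ω, (walkSum X p q ω)^2 * ((X (p+q) ω:ℝ))^1 ∂P)
              + ∫ ω, (3 * ((walkSum X p q ω)^1 * ((X (p+q) ω:ℝ))^2)
                + (walkSum X p q ω)^0 * ((X (p+q) ω:ℝ))^3) ∂P) := by
          rw [hca 3 (fun ω => (walkSum X p q ω)^2 * ((X (p+q) ω:ℝ))^1) (fun ω => 3 * ((walkSum X p q ω)^1 * ((X (p+q) ω:ℝ))^2) + (walkSum X p q ω)^0 * ((X (p+q) ω:ℝ))^3) (hint 2 1) (by exact ((hint 1 2).const_mul 3).add (hint 0 3))]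
        _ = (∫ ω, (walkSum X p q ω)^3 * ((X (p+q) ω:ℝ))^0 ∂P)
            + (3 * (∫ ω, (walkSum X p q ω)^2 * ((X (p+q) ω:ℝ))^1 ∂P)
              + (3 * (∫ ω, (walkSum X p q ω)^1 * ((X (p+q) ω:ℝ))^2 ∂P)
                + ∫ ω, (walkSum X p q ω)^0 * ((X (p+q) ω:ℝ))^3 ∂P)) := by
          rw [hca 3 (fun ω => (walkSum X p q ω)^1 * ((X (p+q) ω:ℝ))^2) (fun ω => (walkSum X p q ω)^0 * ((X (p+q) ω:ℝ))^3) (hint 1 2) (hint 0 3)]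
        _ = 0 := by
          rw [hmul 3 0, hmul 2 1, hmul 1 2, hmul 0 3, ih1, ih3, hV, hV, hV, hV]
          norm_num
    · calc ∫ ω, (walkSum X p (q+1) ω)^4 ∂P
          = ∫ ω, ((walkSum X p q ω)^4 * ((X (p+q) ω:ℝ))^0
            + (4 * ((walkSum X p q ω)^3 * ((X (p+q) ω:ℝ))^1)
            + (6 * ((walkSum X p q ω)^2 * ((X (p+q) ω:ℝ))^2)
            + (4 * ((walkSum X p q ω)^1 * ((X (p+q) ω:ℝ))^3)
            + (walkSum X p q ω)^0 * ((X (p+q) ω:ℝ))^4)))) ∂P := key4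
        _ = (∫ ω, (walkSum X p q ω)^4 * ((X (p+q) ω:ℝ))^0 ∂P)
            + ∫ ω, (4 * ((walkSum X p q ω)^3 * ((X (p+q) ω:ℝ))^1)
              + (6 * ((walkSum X p q ω)^2 * ((X (p+q) ω:ℝ))^2)
              + (4 * ((walkSum X p q ω)^1 * ((X (p+q) ω:ℝ))^3)
              + (walkSum X p q ω)^0 * ((X (p+q) ω:ℝ))^4))) ∂P :=
          integral_add (hint 4 0) (((hint 3 1).const_mul 4).add
            (((hint 2 2).const_mul 6).add (((hint 1 3).const_mul 4).add (hint 0 4))))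
        _ = (∫ ω, (walkSum X p q ω)^4 * ((X (p+q) ω:ℝ))^0 ∂P)
            + (4 * (∫ ω, (walkSum X p q ω)^3 * ((X (p+q) ω:ℝ))^1 ∂P)
              + ∫ ω, (6 * ((walkSum X p q ω)^2 * ((X (p+q) ω:ℝ))^2)
                + (4 * ((walkSum X p q ω)^1 * ((X (p+q) ω:ℝ))^3)
                + (walkSum X p q ω)^0 * ((X (p+q) ω:ℝ))^4)) ∂P) := by
          rw [hca 4 (fun ω => (walkSum X p q ω)^3 * ((X (p+q) ω:ℝ))^1) (fun ω => 6 * ((walkSum X p q ω)^2 * ((X (p+q) ω:ℝ))^2) + (4 * ((walkSum X p q ω)^1 * ((X (p+q) ω:ℝ))^3) + (walkSum X p q ω)^0 * ((X (p+q) ω:ℝ))^4)) (hint 3 1) (by exact ((hint 2 2).const_mul 6).add (((hint 1 3).const_mul 4).add (hint 0 4)))]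
        _ = (∫ ω, (walkSum X p q ω)^4 * ((X (p+q) ω:ℝ))^0 ∂P)
            + (4 * (∫ ω, (walkSum X p q ω)^3 * ((X (p+q) ω:ℝ))^1 ∂P)
              + (6 * (∫ ω, (walkSum X p q ω)^2 * ((X (p+q) ω:ℝ))^2 ∂P)
                + ∫ ω, (4 * ((walkSum X p q ω)^1 * ((X (p+q) ω:ℝ))^3)
                  + (walkSum X p q ω)^0 * ((X (p+q) ω:ℝ))^4) ∂P)) := by
          rw [hca 6 (fun ω => (walkSum X p q ω)^2 * ((X (p+q) ω:ℝ))^2) (fun ω => 4 * ((walkSum X p q ω)^1 * ((X (p+q) ω:ℝ))^3) + (walkSum X p q ω)^0 * ((X (p+q) ω:ℝ))^4) (hint 2 2) (by exact ((hint 1 3).const_mul 4).add (hint 0 4))]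
        _ = (∫ ω, (walkSum X p q ω)^4 * ((X (p+q) ω:ℝ))^0 ∂P)
            + (4 * (∫ ω, (walkSum X p q ω)^3 * ((X (p+q) ω:ℝ))^1 ∂P)
              + (6 * (∫ ω, (walkSum X p q ω)^2 * ((X (p+q) ω:ℝ))^2 ∂P)
                + (4 * (∫ ω, (walkSum X p q ω)^1 * ((X (p+q) ω:ℝ))^3 ∂P)
                  + ∫ ω, (walkSum X p q ω)^0 * ((X (p+q) ω:ℝ))^4 ∂P))) := by
          rw [hca 4 (fun ω => (walkSum X p q ω)^1 * ((X (p+q) ω:ℝ))^3) (fun ω => (walkSum X p q ω)^0 * ((X (p+q) ω:ℝ))^4) (hint 1 3) (hint 0 4)]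
        _ ≤ 3 * ((q+1:ℕ):ℝ)^2 := by
          rw [hmul 4 0, hmul 3 1, hmul 2 2, hmul 1 3, hmul 0 4, ih1, ih2, ih3, hV, hV, hV, hV, hV]
          push_cast
          norm_num
          nlinarith [ih4, sq_nonneg ((q:ℝ))]


section Maximal

/-- the first-exceedance event -/
def exceedSet (X : ℕ → Ω → ℤ) (x : ℝ) (p m : ℕ) : Set Ω :=
  {ω | x < |walkSum X p m ω| ∧ ∀ l, l < m → |walkSum X p l ω| ≤ x}

variable {P}

lemma exceedSet_measurable (hXmeas : ∀ j, Measurable (X j)) (x : ℝ) (p m : ℕ) :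
    MeasurableSet (exceedSet X x p m) := by
  have hW : ∀ l, Measurable (walkSum X p l) := walkSum_measurable hXmeas p
  have : exceedSet X x p m = {ω | x < |walkSum X p m ω|}
      ∩ ⋂ (l : ℕ), ⋂ (_ : l < m), {ω | |walkSum X p l ω| ≤ x} := by
    ext ω; simp [exceedSet]
  rw [this]
  exact (measurableSet_lt measurable_const (hW m).abs).inter
    (MeasurableSet.iInter fun l => MeasurableSet.iInter fun _ =>
      measurableSet_le (hW l).abs measurable_const)

variable (P)

lemma indicator_int (hXmeas : ∀ j, Measurable (X j))
    (hXdist : ∀ j, P {ω | X j ω = 1} = 1/2 ∧ P {ω | X j ω = -1} = 1/2)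
    (x : ℝ) (p m : ℕ) (a : ℕ) :
    Integrable (fun ω => (exceedSet X x p m).indicator
      (fun ω => (walkSum X p m ω)^a) ω) P := by
  refine int_aux P (((walkSum_measurable hXmeas p m).pow_const a).indicator
    (exceedSet_measurable hXmeas x p m)) (C := (m:ℝ)^a) ?_
  filter_upwards [walkSum_ae_bdd P hXmeas hXdist p m] with ω h1
  by_cases hω : ω ∈ exceedSet X x p m
  · rw [Set.indicator_of_mem hω, abs_pow]
    exact pow_le_pow_left₀ (abs_nonneg _) h1 a
  · rw [Set.indicator_of_notMem hω]
    simp only [abs_zero]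
    positivity

lemma indicator_mul_int (hXmeas : ∀ j, Measurable (X j))
    (hXdist : ∀ j, P {ω | X j ω = 1} = 1/2 ∧ P {ω | X j ω = -1} = 1/2)
    (x : ℝ) (p m : ℕ) (a b k : ℕ) :
    Integrable (fun ω => (exceedSet X x p m).indicator
      (fun ω => (walkSum X p m ω)^a) ω * (walkSum X (p+m) k ω)^b) P := by
  refine int_aux P ((((walkSum_measurable hXmeas p m).pow_const a).indicator
    (exceedSet_measurable hXmeas x p m)).mul
    ((walkSum_measurable hXmeas (p+m) k).pow_const b)) (C := (m:ℝ)^a * (k:ℝ)^b) ?_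
  filter_upwards [walkSum_ae_bdd P hXmeas hXdist p m, walkSum_ae_bdd P hXmeas hXdist (p+m) k]
    with ω h1 h2
  rw [abs_mul, abs_pow]
  have hi : |(exceedSet X x p m).indicator (fun ω => (walkSum X p m ω)^a) ω| ≤ (m:ℝ)^a := by
    by_cases hω : ω ∈ exceedSet X x p m
    · rw [Set.indicator_of_mem hω, abs_pow]
      exact pow_le_pow_left₀ (abs_nonneg _) h1 a
    · rw [Set.indicator_of_notMem hω]
      simp only [abs_zero]
      positivity
  have h2' : |walkSum X (p+m) k ω| ^ b ≤ (k:ℝ)^b := pow_le_pow_left₀ (abs_nonneg _) h2 b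
  have h0 : (0:ℝ) ≤ |walkSum X (p+m) k ω| ^ b := by positivity
  calc |(exceedSet X x p m).indicator (fun ω => (walkSum X p m ω)^a) ω| * |walkSum X (p+m) k ω| ^ b
      ≤ (m:ℝ)^a * (k:ℝ)^b := by
        refine mul_le_mul hi h2' h0 ?_
        positivity

/-- independence of the first-exceedance data and the future increments -/
lemma block_mul (hXmeas : ∀ j, Measurable (X j))
    (hXindep : iIndepFun X P)
    (hXdist : ∀ j, P {ω | X j ω = 1} = 1/2 ∧ P {ω | X j ω = -1} = 1/2)
    (x : ℝ) (p m : ℕ) (a b k : ℕ) :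
    ∫ ω, (exceedSet X x p m).indicator (fun ω => (walkSum X p m ω)^a) ω
        * (walkSum X (p+m) k ω)^b ∂P
      = (∫ ω, (exceedSet X x p m).indicator (fun ω => (walkSum X p m ω)^a) ω ∂P)
        * ∫ ω, (walkSum X (p+m) k ω)^b ∂P := by
  classical
  set S : Finset ℕ := Finset.Ico p (p+m) with hS
  set T : Finset ℕ := Finset.Ico (p+m) (p+m+k) with hT
  have hST : Disjoint S T := Finset.Ico_disjoint_Ico_consecutive p (p+m) (p+m+k)
  -- partial sums as functions of the block restriction
  set g : ℕ → (S → ℤ) → ℝ :=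
    fun l v => ∑ j ∈ Finset.Ico p (p+l), if h : j ∈ S then ((v ⟨j, h⟩ : ℤ) : ℝ) else 0 with hg
  have hgl : ∀ l, l ≤ m → ∀ ω : Ω, g l (fun i => X (i:ℕ) ω) = walkSum X p l ω := by
    intro l hl ω
    rw [hg, walkSum]
    refine Finset.sum_congr rfl fun j hj => ?_
    have hjS : j ∈ S := by
      rw [hS]
      simp only [Finset.mem_Ico] at hj ⊢
      omega
    rw [dif_pos hjS]
  set C : Set (S → ℤ) := {v | x < |g m v| ∧ ∀ l, l < m → |g l v| ≤ x} with hC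
  set F : (S → ℤ) → ℝ := fun v => C.indicator (fun v => (g m v)^a) v with hF
  set G : (T → ℤ) → ℝ := fun w => (∑ i : T, ((w i : ℤ) : ℝ))^b with hG
  have hmem : ∀ ω : Ω, ((fun i : S => X (i:ℕ) ω) ∈ C) ↔ ω ∈ exceedSet X x p m := by
    intro ω
    rw [hC]
    simp only [Set.mem_setOf_eq, exceedSet]
    rw [hgl m le_rfl]
    constructor
    · rintro ⟨h1, h2⟩
      exact ⟨h1, fun l hl => by have := h2 l hl; rwa [hgl l (le_of_lt hl) ω] at this⟩
    · rintro ⟨h1, h2⟩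
      exact ⟨h1, fun l hl => by rw [hgl l (le_of_lt hl) ω]; exact h2 l hl⟩
  have hFeq : ∀ ω : Ω, F (fun i : S => X (i:ℕ) ω)
      = (exceedSet X x p m).indicator (fun ω => (walkSum X p m ω)^a) ω := by
    intro ω
    by_cases hω : ω ∈ exceedSet X x p m
    · rw [hF]
      simp only []
      rw [Set.indicator_of_mem ((hmem ω).mpr hω), Set.indicator_of_mem hω, hgl m le_rfl]
    · rw [hF]
      simp only []
      rw [Set.indicator_of_notMem (fun hc => hω ((hmem ω).mp hc)),
        Set.indicator_of_notMem hω]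
  have hGeq : ∀ ω : Ω, G (fun i : T => X (i:ℕ) ω) = (walkSum X (p+m) k ω)^b := by
    intro ω
    rw [hG]
    simp only []
    congr 1
    exact Finset.sum_coe_sort T (fun j => ((X j ω : ℤ) : ℝ))
  have hI := blockIndep P hXmeas hXindep S T hST F G
  have hI' : IndepFun
      (fun ω => (exceedSet X x p m).indicator (fun ω => (walkSum X p m ω)^a) ω)
      (fun ω => (walkSum X (p+m) k ω)^b) P := by
    have e1 : (fun ω => F (fun i : S => X (i:ℕ) ω))
        = fun ω => (exceedSet X x p m).indicator (fun ω => (walkSum X p m ω)^a) ω :=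
      funext hFeq
    have e2 : (fun ω => G (fun i : T => X (i:ℕ) ω)) = fun ω => (walkSum X (p+m) k ω)^b :=
      funext hGeq
    rw [e1, e2] at hI
    exact hI
  exact hI'.integral_fun_mul_eq_mul_integral
    (indicator_int P hXmeas hXdist x p m a).aestronglyMeasurable
    (Integrable.aestronglyMeasurable (by simpa using int_WV P hXmeas hXdist (p+m) k b 0))


lemma walk_maximal (hXmeas : ∀ j, Measurable (X j))
    (hXindep : iIndepFun X P)
    (hXdist : ∀ j, P {ω | X j ω = 1} = 1/2 ∧ P {ω | X j ω = -1} = 1/2)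
    (p q : ℕ) (x : ℝ) (hx : 0 < x) :
    P {ω | ∃ m, m ≤ q ∧ x < |walkSum X p m ω|}
      ≤ ENNReal.ofReal (3 * (q:ℝ)^2 / x^4) := by
  have hAm : ∀ m, MeasurableSet (exceedSet X x p m) :=
    fun m => exceedSet_measurable hXmeas x p m
  have hWint : ∀ (p' q' a : ℕ), Integrable (fun ω => (walkSum X p' q' ω)^a) P :=
    fun p' q' a => walk_pow_integrable P hXmeas hXdist p' q' a
  have hca : ∀ (c : ℝ) (f g : Ω → ℝ), Integrable f P → Integrable g P →
      ∫ ω, (c * f ω + g ω) ∂P = c * (∫ ω, f ω ∂P) + ∫ ω, g ω ∂P := by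
    intro c f g hf hg
    rw [integral_add (hf.const_mul c) hg, integral_const_mul]
  have hadd : ∀ (f g : Ω → ℝ), Integrable f P → Integrable g P →
      Integrable (fun ω => f ω + g ω) P := fun f g hf hg => hf.add hg
  have hcm : ∀ (c : ℝ) (f : Ω → ℝ), Integrable f P → Integrable (fun ω => c * f ω) P :=
    fun c f hf => hf.const_mul c
  -- key estimate for each m ≤ q
  have key : ∀ m, m ≤ q → x^4 * (P (exceedSet X x p m)).toReal
      ≤ ∫ ω in exceedSet X x p m, (walkSum X p q ω)^4 ∂P := by
    intro m hm
    have hZ : ∀ ω, walkSum X p q ω = walkSum X p m ω + walkSum X (p+m) (q-m) ω := by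
      intro ω
      have h1 : p ≤ p + m := Nat.le_add_right p m
      have h2 : p + m ≤ p + q := by omega
      have h3 : p + m + (q - m) = p + q := by omega
      rw [walkSum, walkSum, walkSum, h3]
      exact (Finset.sum_Ico_consecutive _ h1 h2).symm
    have hptw : ∀ ω, (exceedSet X x p m).indicator (fun ω => (walkSum X p q ω)^4) ω
        = (exceedSet X x p m).indicator (fun ω => (walkSum X p m ω)^4) ω
            * (walkSum X (p+m) (q-m) ω)^0
          + (4 * ((exceedSet X x p m).indicator (fun ω => (walkSum X p m ω)^3) ω
            * (walkSum X (p+m) (q-m) ω)^1)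
          + (6 * ((exceedSet X x p m).indicator (fun ω => (walkSum X p m ω)^2) ω
            * (walkSum X (p+m) (q-m) ω)^2)
          + (4 * ((exceedSet X x p m).indicator (fun ω => (walkSum X p m ω)^1) ω
            * (walkSum X (p+m) (q-m) ω)^3)
          + (exceedSet X x p m).indicator (fun ω => (walkSum X p m ω)^0) ω
            * (walkSum X (p+m) (q-m) ω)^4))) := by
      intro ω
      by_cases hω : ω ∈ exceedSet X x p m
      · simp only [Set.indicator_of_mem hω]
        rw [hZ ω]; ring
      · simp [Set.indicator_of_notMem hω]
    have hbm := block_mul P hXmeas hXindep hXdist x p m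
    have hii := indicator_mul_int P hXmeas hXdist x p m
    obtain ⟨hZ1, hZ2, hZ3, hZ4⟩ := walk_moments P hXmeas hXindep hXdist (p+m) (q-m)
    have hExp : ∫ ω in exceedSet X x p m, (walkSum X p q ω)^4 ∂P
        = (∫ ω, (exceedSet X x p m).indicator (fun ω => (walkSum X p m ω)^4) ω ∂P)
            * (∫ ω, (walkSum X (p+m) (q-m) ω)^0 ∂P)
          + (4 * ((∫ ω, (exceedSet X x p m).indicator (fun ω => (walkSum X p m ω)^3) ω ∂P)
            * (∫ ω, (walkSum X (p+m) (q-m) ω)^1 ∂P))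
          + (6 * ((∫ ω, (exceedSet X x p m).indicator (fun ω => (walkSum X p m ω)^2) ω ∂P)
            * (∫ ω, (walkSum X (p+m) (q-m) ω)^2 ∂P))
          + (4 * ((∫ ω, (exceedSet X x p m).indicator (fun ω => (walkSum X p m ω)^1) ω ∂P)
            * (∫ ω, (walkSum X (p+m) (q-m) ω)^3 ∂P))
          + (∫ ω, (exceedSet X x p m).indicator (fun ω => (walkSum X p m ω)^0) ω ∂P)
            * (∫ ω, (walkSum X (p+m) (q-m) ω)^4 ∂P)))) := by
      rw [← integral_indicator (hAm m)]
      calc ∫ ω, (exceedSet X x p m).indicator (fun ω => (walkSum X p q ω)^4) ω ∂P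
          = ∫ ω, ((exceedSet X x p m).indicator (fun ω => (walkSum X p m ω)^4) ω
              * (walkSum X (p+m) (q-m) ω)^0
            + (4 * ((exceedSet X x p m).indicator (fun ω => (walkSum X p m ω)^3) ω
              * (walkSum X (p+m) (q-m) ω)^1)
            + (6 * ((exceedSet X x p m).indicator (fun ω => (walkSum X p m ω)^2) ω
              * (walkSum X (p+m) (q-m) ω)^2)
            + (4 * ((exceedSet X x p m).indicator (fun ω => (walkSum X p m ω)^1) ω
              * (walkSum X (p+m) (q-m) ω)^3)
            + (exceedSet X x p m).indicator (fun ω => (walkSum X p m ω)^0) ω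
              * (walkSum X (p+m) (q-m) ω)^4)))) ∂P :=
            integral_congr_ae (Filter.Eventually.of_forall fun ω => by
              dsimp only
              exact hptw ω)
        _ = (∫ ω, (exceedSet X x p m).indicator (fun ω => (walkSum X p m ω)^4) ω
              * (walkSum X (p+m) (q-m) ω)^0 ∂P)
            + ∫ ω, (4 * ((exceedSet X x p m).indicator (fun ω => (walkSum X p m ω)^3) ω
              * (walkSum X (p+m) (q-m) ω)^1)
            + (6 * ((exceedSet X x p m).indicator (fun ω => (walkSum X p m ω)^2) ω
              * (walkSum X (p+m) (q-m) ω)^2)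
            + (4 * ((exceedSet X x p m).indicator (fun ω => (walkSum X p m ω)^1) ω
              * (walkSum X (p+m) (q-m) ω)^3)
            + (exceedSet X x p m).indicator (fun ω => (walkSum X p m ω)^0) ω
              * (walkSum X (p+m) (q-m) ω)^4))) ∂P :=
            integral_add (hii 4 0 (q-m)) (hadd _ _ (hcm 4 _ (hii 3 1 (q-m)))
              (hadd _ _ (hcm 6 _ (hii 2 2 (q-m)))
                (hadd _ _ (hcm 4 _ (hii 1 3 (q-m))) (hii 0 4 (q-m)))))
        _ = _ := by
            rw [hca 4 (fun ω => (exceedSet X x p m).indicator (fun ω => (walkSum X p m ω)^3) ω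
                * (walkSum X (p+m) (q-m) ω)^1)
              (fun ω => 6 * ((exceedSet X x p m).indicator (fun ω => (walkSum X p m ω)^2) ω
                * (walkSum X (p+m) (q-m) ω)^2)
              + (4 * ((exceedSet X x p m).indicator (fun ω => (walkSum X p m ω)^1) ω
                * (walkSum X (p+m) (q-m) ω)^3)
              + (exceedSet X x p m).indicator (fun ω => (walkSum X p m ω)^0) ω
                * (walkSum X (p+m) (q-m) ω)^4))
              (hii 3 1 (q-m)) (hadd _ _ (hcm 6 _ (hii 2 2 (q-m)))
                (hadd _ _ (hcm 4 _ (hii 1 3 (q-m))) (hii 0 4 (q-m)))),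
              hca 6 (fun ω => (exceedSet X x p m).indicator (fun ω => (walkSum X p m ω)^2) ω
                * (walkSum X (p+m) (q-m) ω)^2)
              (fun ω => 4 * ((exceedSet X x p m).indicator (fun ω => (walkSum X p m ω)^1) ω
                * (walkSum X (p+m) (q-m) ω)^3)
              + (exceedSet X x p m).indicator (fun ω => (walkSum X p m ω)^0) ω
                * (walkSum X (p+m) (q-m) ω)^4)
              (hii 2 2 (q-m)) (hadd _ _ (hcm 4 _ (hii 1 3 (q-m))) (hii 0 4 (q-m))),
              hca 4 (fun ω => (exceedSet X x p m).indicator (fun ω => (walkSum X p m ω)^1) ω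
                * (walkSum X (p+m) (q-m) ω)^3)
              (fun ω => (exceedSet X x p m).indicator (fun ω => (walkSum X p m ω)^0) ω
                * (walkSum X (p+m) (q-m) ω)^4)
              (hii 1 3 (q-m)) (hii 0 4 (q-m)),
              hbm 4 0 (q-m), hbm 3 1 (q-m), hbm 2 2 (q-m), hbm 1 3 (q-m), hbm 0 4 (q-m)]
    rw [hExp, hZ1, hZ3]
    have hE0 : ∫ ω, (walkSum X (p+m) (q-m) ω)^0 ∂P = 1 := by
      simp
    rw [hE0, hZ2, mul_one]
    have hI2 : 0 ≤ ∫ ω, (exceedSet X x p m).indicator (fun ω => (walkSum X p m ω)^2) ω ∂P :=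
      integral_nonneg fun ω => Set.indicator_nonneg (fun ω _ => by positivity) ω
    have hI0 : 0 ≤ ∫ ω, (exceedSet X x p m).indicator (fun ω => (walkSum X p m ω)^0) ω ∂P :=
      integral_nonneg fun ω => Set.indicator_nonneg (fun ω _ => by positivity) ω
    have hE4 : 0 ≤ ∫ ω, (walkSum X (p+m) (q-m) ω)^4 ∂P :=
      integral_nonneg fun ω => by positivity
    have hI4 : x^4 * (P (exceedSet X x p m)).toReal
        ≤ ∫ ω, (exceedSet X x p m).indicator (fun ω => (walkSum X p m ω)^4) ω ∂P := by
      have hmono : ∫ ω, (exceedSet X x p m).indicator (fun _ => x^4) ω ∂P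
          ≤ ∫ ω, (exceedSet X x p m).indicator (fun ω => (walkSum X p m ω)^4) ω ∂P := by
        refine integral_mono ((integrable_const (x^4)).indicator (hAm m))
          (indicator_int P hXmeas hXdist x p m 4) fun ω => ?_
        by_cases hω : ω ∈ exceedSet X x p m
        · rw [Set.indicator_of_mem hω, Set.indicator_of_mem hω]
          have hlt : x < |walkSum X p m ω| := hω.1
          calc x^4 ≤ |walkSum X p m ω|^4 := by
                exact pow_le_pow_left₀ hx.le hlt.le 4
            _ = (walkSum X p m ω)^4 := by
                rw [← abs_pow]
                exact abs_of_nonneg (by positivity)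
        · rw [Set.indicator_of_notMem hω, Set.indicator_of_notMem hω]
      rw [integral_indicator_const _ (hAm m), smul_eq_mul, mul_comm] at hmono
      exact hmono
    nlinarith [mul_nonneg hI2 (Nat.cast_nonneg (q-m) : (0:ℝ) ≤ (q-m:ℕ)),
      mul_nonneg hI0 hE4]
  -- assemble
  have hsub : {ω | ∃ m, m ≤ q ∧ x < |walkSum X p m ω|}
      ⊆ ⋃ m ∈ Finset.range (q+1), exceedSet X x p m := by
    rintro ω ⟨m, hm, hgt⟩
    have hex : ∃ l, x < |walkSum X p l ω| := ⟨m, hgt⟩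
    simp only [Set.mem_iUnion, Finset.mem_range]
    refine ⟨Nat.find hex, ?_, Nat.find_spec hex, fun l hl => not_lt.mp (Nat.find_min hex hl)⟩
    have := Nat.find_min' hex hgt
    omega
  have hd : Set.PairwiseDisjoint (↑(Finset.range (q+1)) : Set ℕ)
      (fun m => exceedSet X x p m) := by
    intro m _ m' _ hne
    rcases Nat.lt_or_ge m m' with h | h
    · refine Set.disjoint_left.mpr fun ω h1 h2 => ?_
      exact absurd (h2.2 m h) (not_le.mpr h1.1)
    · have h' : m' < m := by omega
      refine Set.disjoint_left.mpr fun ω h1 h2 => ?_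
      exact absurd (h1.2 m' h') (not_le.mpr h2.1)
  have hsum : ∑ m ∈ Finset.range (q+1), (P (exceedSet X x p m)).toReal
      ≤ 3 * (q:ℝ)^2 / x^4 := by
    have hx4 : (0:ℝ) < x^4 := by positivity
    rw [le_div_iff₀ hx4]
    have h1 : ∀ m ∈ Finset.range (q+1),
        x^4 * (P (exceedSet X x p m)).toReal
          ≤ ∫ ω in exceedSet X x p m, (walkSum X p q ω)^4 ∂P := by
      intro m hm
      exact key m (by simp at hm; omega)
    calc (∑ m ∈ Finset.range (q+1), (P (exceedSet X x p m)).toReal) * x^4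
        = ∑ m ∈ Finset.range (q+1), x^4 * (P (exceedSet X x p m)).toReal := by
          rw [Finset.sum_mul]
          exact Finset.sum_congr rfl fun m _ => mul_comm _ _
      _ ≤ ∑ m ∈ Finset.range (q+1), ∫ ω in exceedSet X x p m, (walkSum X p q ω)^4 ∂P :=
          Finset.sum_le_sum h1
      _ = ∫ ω in ⋃ m ∈ Finset.range (q+1), exceedSet X x p m, (walkSum X p q ω)^4 ∂P :=
          (integral_biUnion_finset _ (fun m _ => hAm m) hd
            (fun m _ => (hWint p q 4).integrableOn)).symm
      _ ≤ ∫ ω, (walkSum X p q ω)^4 ∂P :=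
          setIntegral_le_integral (hWint p q 4)
            (Filter.Eventually.of_forall fun ω => by positivity)
      _ ≤ 3 * (q:ℝ)^2 := (walk_moments P hXmeas hXindep hXdist p q).2.2.2
  calc P {ω | ∃ m, m ≤ q ∧ x < |walkSum X p m ω|}
      ≤ P (⋃ m ∈ Finset.range (q+1), exceedSet X x p m) := measure_mono hsub
    _ = ∑ m ∈ Finset.range (q+1), P (exceedSet X x p m) :=
        measure_biUnion_finset hd (fun m _ => hAm m)
    _ ≤ ENNReal.ofReal (3 * (q:ℝ)^2 / x^4) := by
        have hne : ∀ m ∈ Finset.range (q+1), P (exceedSet X x p m) ≠ ⊤ :=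
          fun m _ => measure_ne_top _ _
        rw [← ENNReal.ofReal_toReal (a := ∑ m ∈ Finset.range (q+1), P (exceedSet X x p m))
          (ENNReal.sum_ne_top.mpr hne), ENNReal.toReal_sum hne]
        exact ENNReal.ofReal_le_ofReal hsum

end Maximal

section Window


lemma window_bound (N : ℝ → Ω → ℕ)
    (hN : IsPoissonProcess P 1 N)
    (hXmeas : ∀ j, Measurable (X j))
    (hXindep : iIndepFun X P)
    (hXdist : ∀ j, P {ω | X j ω = 1} = 1/2 ∧ P {ω | X j ω = -1} = 1/2)
    (hNX : IndepFun (fun ω => fun t : ℝ => N t ω) (fun ω => fun j : ℕ => X j ω) P)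
    (u v : ℝ) (hu : 0 ≤ u) (huv : u ≤ v) (x : ℝ) (hx : 0 < x) :
    P {ω | ∃ m', m' ≤ N v ω - N u ω ∧ x < |walkSum X (N u ω) m' ω|}
      ≤ ENNReal.ofReal (3 * ((v - u)^2 + (v - u)) / x^4) := by
  set A : ℕ × ℕ → Set Ω := fun pq => {ω | N u ω = pq.1 ∧ N v ω - N u ω = pq.2} with hA
  set B : ℕ × ℕ → Set Ω :=
    fun pq => {ω | ∃ m', m' ≤ pq.2 ∧ x < |walkSum X pq.1 m' ω|} with hB
  have hsub : {ω | ∃ m', m' ≤ N v ω - N u ω ∧ x < |walkSum X (N u ω) m' ω|}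
      ⊆ ⋃ pq : ℕ × ℕ, A pq ∩ B pq := by
    intro ω hω
    exact Set.mem_iUnion.mpr ⟨(N u ω, N v ω - N u ω), ⟨rfl, rfl⟩, hω⟩
  have hAmeas : ∀ pq : ℕ × ℕ, MeasurableSet (A pq) := by
    intro pq
    exact (((hN.2.2.1 u) (measurableSet_singleton pq.1)).inter
      (((hN.2.2.1 v).sub (hN.2.2.1 u)) (measurableSet_singleton pq.2)))
  have hprod : ∀ pq : ℕ × ℕ, P (A pq ∩ B pq) = P (A pq) * P (B pq) := by
    intro pq
    have h1 : MeasurableSet {φ : ℝ → ℕ | φ u = pq.1} := by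
      have he : {φ : ℝ → ℕ | φ u = pq.1} = (fun φ : ℝ → ℕ => φ u) ⁻¹' {pq.1} := rfl
      rw [he]
      exact measurable_pi_apply u (measurableSet_singleton _)
    have h2 : MeasurableSet {φ : ℝ → ℕ | φ v - φ u = pq.2} := by
      have he : {φ : ℝ → ℕ | φ v - φ u = pq.2}
          = (fun φ : ℝ → ℕ => φ v - φ u) ⁻¹' {pq.2} := rfl
      rw [he]
      exact ((measurable_pi_apply v).sub (measurable_pi_apply u)) (measurableSet_singleton _)
    have hSA : MeasurableSet ({φ : ℝ → ℕ | φ u = pq.1} ∩ {φ | φ v - φ u = pq.2}) :=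
      h1.inter h2
    have hSB : MeasurableSet {ψ : ℕ → ℤ |
        ∃ m', m' ≤ pq.2 ∧ x < |∑ j ∈ Finset.Ico pq.1 (pq.1+m'), ((ψ j : ℤ) : ℝ)|} := by
      have : {ψ : ℕ → ℤ | ∃ m', m' ≤ pq.2 ∧
          x < |∑ j ∈ Finset.Ico pq.1 (pq.1+m'), ((ψ j : ℤ) : ℝ)|}
          = ⋃ (m' : ℕ), ⋃ (_ : m' ≤ pq.2),
            {ψ : ℕ → ℤ | x < |∑ j ∈ Finset.Ico pq.1 (pq.1+m'), ((ψ j : ℤ) : ℝ)|} := by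
        ext ψ; simp
      rw [this]
      refine MeasurableSet.iUnion fun m' => MeasurableSet.iUnion fun _ => ?_
      exact measurableSet_lt measurable_const
        ((Finset.measurable_sum _ fun j _ =>
          (measurable_of_countable (Int.cast : ℤ → ℝ)).comp (measurable_pi_apply j)).abs)
    exact hNX.measure_inter_preimage_eq_mul _ _ hSA hSB
  have hPB : ∀ pq : ℕ × ℕ, P (B pq) ≤ ENNReal.ofReal (3 * ((pq.2:ℝ))^2 / x^4) :=
    fun pq => walk_maximal P hXmeas hXindep hXdist pq.1 pq.2 x hx
  have hPA : ∀ q : ℕ, (∑' p : ℕ, P (A (p, q))) = P {ω | N v ω - N u ω = q} := by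
    intro q
    have hdis : Pairwise (Function.onFun Disjoint (fun p => A (p, q))) := by
      intro p p' hne
      refine Set.disjoint_left.mpr fun ω h1 h2 => hne ?_
      simp only [hA, Set.mem_setOf_eq] at h1 h2
      omega
    have hun : (⋃ p : ℕ, A (p, q)) = {ω | N v ω - N u ω = q} := by
      ext ω
      simp [hA]
    rw [← hun, measure_iUnion hdis (fun p => hAmeas (p, q))]
  have hlaw : ∀ q : ℕ, P {ω | N v ω - N u ω = q}
      = poissonPMF (Real.toNNReal (v - u)) q := by
    intro q
    have hmap := hN.2.2.2.1 u v hu huv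
    rw [one_mul] at hmap
    have hmeas : Measurable (fun ω => N v ω - N u ω) := (hN.2.2.1 v).sub (hN.2.2.1 u)
    have : P {ω | N v ω - N u ω = q}
        = Measure.map (fun ω => N v ω - N u ω) P {q} := by
      rw [Measure.map_apply hmeas (measurableSet_singleton q)]
      rfl
    rw [this, hmap, PMF.toMeasure_apply_singleton _ _ (measurableSet_singleton q)]
  have hvu : (0:ℝ) ≤ v - u := by linarith
  have hofr : ∀ q : ℕ, ENNReal.ofReal (3 * ((q:ℝ))^2 / x^4)
      = ENNReal.ofReal (3 / x^4) * ENNReal.ofReal ((q:ℝ)^2) := by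
    intro q
    rw [← ENNReal.ofReal_mul (by positivity)]
    congr 1
    ring
  calc P {ω | ∃ m', m' ≤ N v ω - N u ω ∧ x < |walkSum X (N u ω) m' ω|}
      ≤ P (⋃ pq : ℕ × ℕ, A pq ∩ B pq) := measure_mono hsub
    _ ≤ ∑' pq : ℕ × ℕ, P (A pq ∩ B pq) := measure_iUnion_le _
    _ = ∑' pq : ℕ × ℕ, P (A pq) * P (B pq) := by
        exact tsum_congr fun pq => hprod pq
    _ ≤ ∑' pq : ℕ × ℕ, P (A pq) * ENNReal.ofReal (3 * ((pq.2:ℝ))^2 / x^4) := by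
        exact ENNReal.tsum_le_tsum fun pq => mul_le_mul_right (hPB pq) _
    _ = ∑' p : ℕ, ∑' q : ℕ, P (A (p, q)) * ENNReal.ofReal (3 * ((q:ℝ))^2 / x^4) := by
        rw [ENNReal.tsum_prod']
    _ = ∑' q : ℕ, ∑' p : ℕ, P (A (p, q)) * ENNReal.ofReal (3 * ((q:ℝ))^2 / x^4) :=
        ENNReal.tsum_comm
    _ = ∑' q : ℕ, (∑' p : ℕ, P (A (p, q))) * ENNReal.ofReal (3 * ((q:ℝ))^2 / x^4) := by
        exact tsum_congr fun q => ENNReal.tsum_mul_right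
    _ = ∑' q : ℕ, poissonPMF (Real.toNNReal (v - u)) q
          * (ENNReal.ofReal (3 / x^4) * ENNReal.ofReal ((q:ℝ)^2)) := by
        refine tsum_congr fun q => ?_
        rw [hPA q, hlaw q, hofr q]
    _ = ENNReal.ofReal (3 / x^4)
          * ∑' q : ℕ, poissonPMF (Real.toNNReal (v - u)) q * ENNReal.ofReal ((q:ℝ)^2) := by
        rw [← ENNReal.tsum_mul_left]
        exact tsum_congr fun q => by ring
    _ = ENNReal.ofReal (3 / x^4)
          * ENNReal.ofReal (((Real.toNNReal (v-u)):ℝ)^2 + (Real.toNNReal (v-u):ℝ)) := by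
        rw [poisson_tsum_sq]
    _ = ENNReal.ofReal (3 * ((v - u)^2 + (v - u)) / x^4) := by
        rw [Real.coe_toNNReal _ hvu, ← ENNReal.ofReal_mul (by positivity)]
        congr 1
        ring

end Window

end Core

section MainArith

lemma final_arith (n : ℕ) (hn : 0 < n) (T δ : ℝ) (hT : 1 ≤ T) (hδ : 0 < δ) (hδ1 : δ ≤ 1) :
    ((⌈T/δ⌉₊ : ℕ) : ℝ) * (3 * ((2*(n:ℝ)^2*δ)^2 + 2*(n:ℝ)^2*δ) / (δ ^ ((1:ℝ)/8) * n)^4)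
      ≤ 2^7 * T * (δ ^ ((1:ℝ)/2) + δ ^ (-(1:ℝ)/2) / (n:ℝ)^2) := by
  have hn' : (0:ℝ) < n := by exact_mod_cast hn
  set u : ℝ := δ ^ ((1:ℝ)/2) with hu
  have hupos : 0 < u := Real.rpow_pos_of_pos hδ _
  have huu : u * u = δ := by
    rw [hu, ← Real.rpow_add hδ]
    norm_num
  have hx4 : (δ ^ ((1:ℝ)/8) * (n:ℝ))^4 = u * (n:ℝ)^4 := by
    rw [mul_pow, ← Real.rpow_natCast (δ ^ ((1:ℝ)/8)) 4, ← Real.rpow_mul hδ.le]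
    norm_num
    exact Or.inl hu.symm
  have hneg : δ ^ (-(1:ℝ)/2) = u⁻¹ := by
    rw [hu, ← Real.rpow_neg hδ.le]
    norm_num
  have hK : ((⌈T/δ⌉₊ : ℕ) : ℝ) ≤ 2*T/δ := by
    have h1 : (1:ℝ) ≤ T/δ := (one_le_div hδ).mpr (le_trans hδ1 hT)
    have h2 : ((⌈T/δ⌉₊ : ℕ) : ℝ) < T/δ + 1 := Nat.ceil_lt_add_one (by linarith)
    have : (2:ℝ)*T/δ = T/δ + T/δ := by ring
    linarith
  have hcpos : 0 ≤ 3 * ((2*(n:ℝ)^2*δ)^2 + 2*(n:ℝ)^2*δ) / (δ ^ ((1:ℝ)/8) * n)^4 := by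
    positivity
  calc ((⌈T/δ⌉₊ : ℕ) : ℝ) * (3 * ((2*(n:ℝ)^2*δ)^2 + 2*(n:ℝ)^2*δ) / (δ ^ ((1:ℝ)/8) * n)^4)
      ≤ (2*T/δ) * (3 * ((2*(n:ℝ)^2*δ)^2 + 2*(n:ℝ)^2*δ) / (δ ^ ((1:ℝ)/8) * n)^4) := by
        exact mul_le_mul_of_nonneg_right hK hcpos
    _ = 24*T*u + 12*T*(u⁻¹/(n:ℝ)^2) := by
        rw [hx4, ← huu]
        field_simp
        ring
    _ ≤ 2^7 * T * (u + δ ^ (-(1:ℝ)/2)/(n:ℝ)^2) := by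
        rw [hneg]
        have hT0 : (0:ℝ) < T := by linarith
        have h1 : (0:ℝ) ≤ T * u := by positivity
        have h2 : (0:ℝ) ≤ T * (u⁻¹/(n:ℝ)^2) := by positivity
        nlinarith

end MainArith


set_option maxHeartbeats 2000000 in
/-- Let `T^n_i` be the rescaled trajectory of particle `i` in the interchange process on
the path of length `n`; it has the law of `(π_n(S_i(n²t))/n; t ≥ 0)` where `S_i` is a
continuous-time rate-1 simple random walk on `ℤ` started at `i`. With
`m_i(δ) = sup_{s,t ∈ [0,T], |s−t| ≤ δ} |T^n_i(t) − T^n_i(s)|`, one has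
`max_{1 ≤ i ≤ n} P(m_i(δ) > 2δ^{1/8}) ≤ 2⁷ T (δ^{1/2} + δ^{−1/2}/n²)`
for `T ≥ 1` and `0 < δ ≤ 1`. -/
theorem rescaled_trajectory_modulus_bound
    {Ω : Type*} [MeasurableSpace Ω] (P : Measure Ω) [IsProbabilityMeasure P]
    (n : ℕ) (hn : 0 < n)
    (N : ℝ → Ω → ℕ) (X : ℕ → Ω → ℤ)
    (hN : IsPoissonProcess P 1 N)
    (hXmeas : ∀ j, Measurable (X j))
    (hXindep : iIndepFun X P)
    (hXdist : ∀ j, P {ω | X j ω = 1} = 1/2 ∧ P {ω | X j ω = -1} = 1/2)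
    (hNX : IndepFun (fun ω => fun t : ℝ => N t ω) (fun ω => fun j : ℕ => X j ω) P)
    (Tn : ℤ → ℝ → Ω → ℝ)
    (hTn : ∀ i s ω, Tn i s ω =
      (foldPath n (i + ∑ j ∈ Finset.range (N ((n : ℝ) ^ 2 * s) ω), X j ω) : ℝ) / n)
    (T δ : ℝ) (hT : 1 ≤ T) (hδ : 0 < δ) (hδ1 : δ ≤ 1) :
    ∀ i : ℤ, 1 ≤ i → i ≤ n →
      (P {ω | (⨆ p : {p : ℝ × ℝ //
            p.1 ∈ Set.Icc 0 T ∧ p.2 ∈ Set.Icc 0 T ∧ |p.1 - p.2| ≤ δ},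
          |Tn i p.1.1 ω - Tn i p.1.2 ω|) > 2 * δ ^ ((1 : ℝ) / 8)}).toReal
        ≤ 2 ^ 7 * T * (δ ^ ((1 : ℝ) / 2) + δ ^ (-(1 : ℝ) / 2) / n ^ 2) := by
  intro i hi1 hin
  have hn' : (0:ℝ) < n := by exact_mod_cast hn
  set x : ℝ := δ ^ ((1:ℝ)/8) * n with hxdef
  have hx : 0 < x := mul_pos (Real.rpow_pos_of_pos hδ _) hn'
  set K : ℕ := ⌈T/δ⌉₊ with hKdef
  set G : ℕ → Set Ω := fun k =>
    {ω | ∃ m', m' ≤ N ((n:ℝ)^2 * (((k:ℝ)+2)*δ)) ω - N ((n:ℝ)^2 * ((k:ℝ)*δ)) ω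
      ∧ x < |walkSum X (N ((n:ℝ)^2 * ((k:ℝ)*δ)) ω) m' ω|} with hGdef
  have hGb : ∀ k : ℕ, P (G k)
      ≤ ENNReal.ofReal (3 * ((2*(n:ℝ)^2*δ)^2 + 2*(n:ℝ)^2*δ) / x^4) := by
    intro k
    have h1 : (0:ℝ) ≤ (n:ℝ)^2 * ((k:ℝ)*δ) := by positivity
    have h2 : (n:ℝ)^2 * ((k:ℝ)*δ) ≤ (n:ℝ)^2 * (((k:ℝ)+2)*δ) := by nlinarith
    have hb := window_bound P N hN hXmeas hXindep hXdist hNX _ _ h1 h2 x hx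
    have hd : (n:ℝ)^2 * (((k:ℝ)+2)*δ) - (n:ℝ)^2 * ((k:ℝ)*δ) = 2*(n:ℝ)^2*δ := by ring
    rw [hd] at hb
    exact hb
  have hincl : {ω | (⨆ p : {p : ℝ × ℝ //
        p.1 ∈ Set.Icc 0 T ∧ p.2 ∈ Set.Icc 0 T ∧ |p.1 - p.2| ≤ δ},
      |Tn i p.1.1 ω - Tn i p.1.2 ω|) > 2 * δ ^ ((1 : ℝ) / 8)}
      ⊆ ⋃ k ∈ Finset.range K, G k := by
    intro ω hω
    have hω' : 2 * δ ^ ((1:ℝ)/8) < ⨆ p : {p : ℝ × ℝ //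
        p.1 ∈ Set.Icc 0 T ∧ p.2 ∈ Set.Icc 0 T ∧ |p.1 - p.2| ≤ δ},
        |Tn i p.1.1 ω - Tn i p.1.2 ω| := hω
    have hex : ∃ p : {p : ℝ × ℝ //
        p.1 ∈ Set.Icc 0 T ∧ p.2 ∈ Set.Icc 0 T ∧ |p.1 - p.2| ≤ δ},
        2 * δ ^ ((1:ℝ)/8) < |Tn i p.1.1 ω - Tn i p.1.2 ω| := by
      by_contra hcon
      push_neg at hcon
      exact absurd hω' (not_lt.mpr (Real.iSup_le (fun p => hcon p) (by positivity)))
    have hK1 : 1 ≤ K := Nat.one_le_iff_ne_zero.mpr (by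
      rw [hKdef]
      simp only [ne_eq, Nat.ceil_eq_zero, not_le]
      positivity)
    have key : ∀ a b : ℝ, a ≤ b → 0 ≤ a → a ≤ T → b ≤ a + δ →
        2 * δ ^ ((1:ℝ)/8) < |Tn i b ω - Tn i a ω| → ω ∈ ⋃ k ∈ Finset.range K, G k := by
      intro a b hab ha0 haT hbad hgt
      set k : ℕ := min (⌊a/δ⌋₊) (K-1) with hkdef
      have hkK : k < K := by
        have := min_le_right (⌊a/δ⌋₊) (K-1)
        omega
      have hk1 : (k:ℝ)*δ ≤ a := by
        have h1 : (k:ℕ) ≤ ⌊a/δ⌋₊ := min_le_left _ _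
        have h2 : ((⌊a/δ⌋₊:ℕ):ℝ) ≤ a/δ := Nat.floor_le (by positivity)
        have h3 : (k:ℝ) ≤ a/δ := le_trans (by exact_mod_cast h1) h2
        calc (k:ℝ)*δ ≤ (a/δ)*δ := by nlinarith
          _ = a := by field_simp
      have hk2 : b ≤ ((k:ℝ)+2)*δ := by
        by_cases hc : ⌊a/δ⌋₊ ≤ K - 1
        · have hke : k = ⌊a/δ⌋₊ := min_eq_left hc
          have h2 : a/δ < (⌊a/δ⌋₊:ℝ) + 1 := Nat.lt_floor_add_one _
          have h3 : a < ((⌊a/δ⌋₊:ℝ) + 1)*δ := by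
            calc a = (a/δ)*δ := by field_simp
              _ < ((⌊a/δ⌋₊:ℝ) + 1)*δ := by nlinarith
          rw [hke]
          nlinarith
        · have hke : k = K - 1 := min_eq_right (by omega)
          have h2 : T/δ ≤ (K:ℝ) := by rw [hKdef]; exact Nat.le_ceil _
          have h3 : T ≤ (K:ℝ)*δ := by
            calc T = (T/δ)*δ := by field_simp
              _ ≤ (K:ℝ)*δ := by nlinarith
          have h4 : ((k:ℕ):ℝ) = (K:ℝ) - 1 := by
            rw [hke]
            push_cast [Nat.cast_sub hK1]
            ring
          rw [h4]
          nlinarith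
      -- now the walk estimates
      have hmono := hN.2.1 ω
      have hn2 : (0:ℝ) ≤ (n:ℝ)^2 := by positivity
      set pp : ℕ := N ((n:ℝ)^2 * ((k:ℝ)*δ)) ω with hpp
      set qq : ℕ := N ((n:ℝ)^2 * (((k:ℝ)+2)*δ)) ω with hqq
      set m1 : ℕ := N ((n:ℝ)^2 * a) ω with hm1
      set m2 : ℕ := N ((n:ℝ)^2 * b) ω with hm2
      have hppm1 : pp ≤ m1 := hmono (mul_le_mul_of_nonneg_left hk1 hn2)
      have hm1m2 : m1 ≤ m2 := hmono (mul_le_mul_of_nonneg_left hab hn2)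
      have hm2qq : m2 ≤ qq := hmono (mul_le_mul_of_nonneg_left hk2 hn2)
      rw [hTn, hTn] at hgt
      set S1 : ℤ := ∑ j ∈ Finset.range m1, X j ω with hS1
      set S2 : ℤ := ∑ j ∈ Finset.range m2, X j ω with hS2
      set Sp : ℤ := ∑ j ∈ Finset.range pp, X j ω with hSp
      have hgt2 : 2 * δ ^ ((1:ℝ)/8) * n
          < |((foldPath n (i + S2) - foldPath n (i + S1) : ℤ) : ℝ)| := by
        have he : ((foldPath n (i + S2) : ℤ):ℝ)/n - ((foldPath n (i + S1) : ℤ):ℝ)/n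
            = ((foldPath n (i + S2) - foldPath n (i + S1) : ℤ) : ℝ)/n := by
          push_cast
          ring
        rw [he] at hgt
        rw [abs_div, abs_of_pos hn'] at hgt
        calc 2 * δ ^ ((1:ℝ)/8) * n
            < (|((foldPath n (i + S2) - foldPath n (i + S1) : ℤ) : ℝ)| / n) * n := by
              nlinarith
          _ = |((foldPath n (i + S2) - foldPath n (i + S1) : ℤ) : ℝ)| := by
              field_simp
      have hlip : |foldPath n (i + S2) - foldPath n (i + S1)| ≤ |S2 - S1| := by
        have := foldPath_lipschitz n hn (i + S2) (i + S1)
        have he : (i + S2) - (i + S1) = S2 - S1 := by ring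
        rwa [he] at this
      have hgt3 : 2 * x < |((S2 - S1 : ℤ) : ℝ)| := by
        have hcast : |((foldPath n (i + S2) - foldPath n (i + S1) : ℤ) : ℝ)|
            ≤ |((S2 - S1 : ℤ) : ℝ)| := by
          rw [← Int.cast_abs, ← Int.cast_abs]
          exact_mod_cast hlip
        have : 2 * x = 2 * δ ^ ((1:ℝ)/8) * n := by rw [hxdef]; ring
        rw [this]
        exact lt_of_lt_of_le hgt2 hcast
      have hd1 : walkSum X pp (m1 - pp) ω = ((S1 - Sp : ℤ) : ℝ) := by
        rw [walkSum, hS1, hSp]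
        have he : pp + (m1 - pp) = m1 := by omega
        rw [he]
        rw [← Finset.sum_range_add_sum_Ico (fun j => X j ω) hppm1]
        push_cast
        ring
      have hd2 : walkSum X pp (m2 - pp) ω = ((S2 - Sp : ℤ) : ℝ) := by
        rw [walkSum, hS2, hSp]
        have he : pp + (m2 - pp) = m2 := by omega
        rw [he]
        rw [← Finset.sum_range_add_sum_Ico (fun j => X j ω) (le_trans hppm1 hm1m2)]
        push_cast
        ring
      have hsplit : x < |walkSum X pp (m1 - pp) ω| ∨ x < |walkSum X pp (m2 - pp) ω| := by
        by_contra hcon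
        push_neg at hcon
        rw [hd1, hd2] at hcon
        have : |((S2 - S1 : ℤ) : ℝ)| ≤ 2 * x := by
          have he : ((S2 - S1 : ℤ) : ℝ) = ((S2 - Sp : ℤ) : ℝ) - ((S1 - Sp : ℤ) : ℝ) := by
            push_cast
            ring
          rw [he]
          calc |((S2 - Sp : ℤ) : ℝ) - ((S1 - Sp : ℤ) : ℝ)|
              ≤ |((S2 - Sp : ℤ) : ℝ)| + |((S1 - Sp : ℤ) : ℝ)| := abs_sub _ _
            _ ≤ x + x := add_le_add hcon.2 hcon.1
            _ = 2 * x := by ring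
        linarith
      simp only [Set.mem_iUnion, Finset.mem_range]
      refine ⟨k, hkK, ?_⟩
      rcases hsplit with h | h
      · exact ⟨m1 - pp, by omega, h⟩
      · exact ⟨m2 - pp, by omega, h⟩
    obtain ⟨⟨⟨s, t⟩, hsI, htI, hstd⟩, hgt⟩ := hex
    simp only at hgt
    have habs := abs_le.mp hstd
    rcases le_total s t with hst | hst
    · exact key s t hst hsI.1 hsI.2 (by linarith) (by rwa [abs_sub_comm] at hgt)
    · exact key t s hst htI.1 htI.2 (by linarith) hgt
  calc (P {ω | (⨆ p : {p : ℝ × ℝ //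
            p.1 ∈ Set.Icc 0 T ∧ p.2 ∈ Set.Icc 0 T ∧ |p.1 - p.2| ≤ δ},
          |Tn i p.1.1 ω - Tn i p.1.2 ω|) > 2 * δ ^ ((1 : ℝ) / 8)}).toReal
      ≤ ((K:ℝ)) * (3 * ((2*(n:ℝ)^2*δ)^2 + 2*(n:ℝ)^2*δ) / x^4) := by
        have hle : P {ω | (⨆ p : {p : ℝ × ℝ //
              p.1 ∈ Set.Icc 0 T ∧ p.2 ∈ Set.Icc 0 T ∧ |p.1 - p.2| ≤ δ},
            |Tn i p.1.1 ω - Tn i p.1.2 ω|) > 2 * δ ^ ((1 : ℝ) / 8)}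
            ≤ ENNReal.ofReal ((K:ℝ) * (3 * ((2*(n:ℝ)^2*δ)^2 + 2*(n:ℝ)^2*δ) / x^4)) := by
          calc P {ω | (⨆ p : {p : ℝ × ℝ //
                p.1 ∈ Set.Icc 0 T ∧ p.2 ∈ Set.Icc 0 T ∧ |p.1 - p.2| ≤ δ},
              |Tn i p.1.1 ω - Tn i p.1.2 ω|) > 2 * δ ^ ((1 : ℝ) / 8)}
              ≤ P (⋃ k ∈ Finset.range K, G k) := measure_mono hincl
            _ ≤ ∑ k ∈ Finset.range K, P (G k) := measure_biUnion_finset_le _ _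
            _ ≤ ∑ k ∈ Finset.range K,
                ENNReal.ofReal (3 * ((2*(n:ℝ)^2*δ)^2 + 2*(n:ℝ)^2*δ) / x^4) :=
                Finset.sum_le_sum fun k _ => hGb k
            _ = K * ENNReal.ofReal (3 * ((2*(n:ℝ)^2*δ)^2 + 2*(n:ℝ)^2*δ) / x^4) := by
                rw [Finset.sum_const, Finset.card_range, nsmul_eq_mul]
            _ = ENNReal.ofReal ((K:ℝ) * (3 * ((2*(n:ℝ)^2*δ)^2 + 2*(n:ℝ)^2*δ) / x^4)) := by
                rw [ENNReal.ofReal_mul (by positivity), ENNReal.ofReal_natCast]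
        exact ENNReal.toReal_le_of_le_ofReal (by positivity) hle
    _ ≤ 2 ^ 7 * T * (δ ^ ((1 : ℝ) / 2) + δ ^ (-(1 : ℝ) / 2) / n ^ 2) := by
        have := final_arith n hn T δ hT hδ hδ1
        rw [hxdef]
        exact_mod_cast this
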